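/- arXiv:2109.11967 — 2 statements merged into one kernel-verified Lean document; each statement's English description precedes it below -/
import Mathlib

section
/- The final coalgebra for the deterministic automaton functor T(X) = 2 × X^A is carried by the set 2^{A*} of languages over A, with structure map sending a language L to the pair (ε?(L), a ↦ a⁻¹L), where ε?(L) = 1 iff the empty word is in L and a⁻¹L = {w | aw ∈ L}. That is, for every coalgebra (V, ⟨o, d⟩ : V → 2 × V^A) there is a unique function !_V : V → 2^{A*} such that for all v ∈ V: ε ∈ !_V(v) ↔ o(v) = 1, and for all a ∈ A, w ∈ A*: aw ∈ !_V(v) ↔ w ∈ !_V(d(v)(a)). -/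
def dstar {V A : Type*} (d : V → A → V) : V → List A → V
  | v, [] => v
  | v, a :: w => dstar d (d v a) w

def lang {V A : Type*} (o : V → Bool) (d : V → A → V) (v : V) : Set (List A) :=
  {w | o (dstar d v w) = true}

theorem final_coalgebra_languages {A V : Type*} (o : V → Bool) (d : V → A → V) :
    ∃! f : V → Set (List A),
      ∀ v : V, (([] : List A) ∈ f v ↔ o v = true) ∧
        ∀ (a : A) (w : List A), (a :: w ∈ f v ↔ w ∈ f (d v a)) := by
  refine ⟨lang o d, fun v => ⟨Iff.rfl, fun a w => Iff.rfl⟩, ?_⟩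
  intro g hg
  funext v
  ext w
  induction w generalizing v with
  | nil => rw [(hg v).1]; exact Iff.rfl
  | cons a w ih => rw [(hg v).2 a w, ih]; exact Iff.rfl
end

section
/- A state of a deterministic automaton over a finite alphabet accepts a regular language if and only if it is bisimilar to a state of a finite automaton. Concretely: for (V,o,d) with A finite and v ∈ V, the language L_V(v) has finitely many distinct Brzozowski word derivatives (i.e., {w⁻¹L_V(v) | w ∈ List A} is finite) if and only if there is a finite automaton (V',o',d'), a state v', and a bisimulation R between V and V' with (v,v') ∈ R. -/
def isBisim {A V₁ V₂ : Type*} (o₁ : V₁ → Bool) (d₁ : V₁ → A → V₁)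
    (o₂ : V₂ → Bool) (d₂ : V₂ → A → V₂) (R : V₁ → V₂ → Prop) : Prop :=
  ∀ x y, R x y → o₁ x = o₂ y ∧ ∀ a : A, R (d₁ x a) (d₂ y a)

lemma lang_deriv {V A : Type*} (o : V → Bool) (d : V → A → V) (x : V) (w : List A) :
    {u | w ++ u ∈ lang o d x} = lang o d (dstar d x w) := by
  induction w generalizing x with
  | nil => simp [lang, dstar]
  | cons a w ih =>
      have : ∀ u, (a :: w) ++ u ∈ lang o d x ↔ w ++ u ∈ lang o d (d x a) := by
        intro u; simp [lang, dstar]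
      ext u
      simp only [Set.mem_setOf_eq, this u]
      rw [show dstar d x (a :: w) = dstar d (d x a) w from rfl, ← ih (d x a)]
      exact Iff.rfl

lemma bisim_dstar {A V₁ V₂ : Type*} {o₁ : V₁ → Bool} {d₁ : V₁ → A → V₁}
    {o₂ : V₂ → Bool} {d₂ : V₂ → A → V₂} {R : V₁ → V₂ → Prop}
    (h : isBisim o₁ d₁ o₂ d₂ R) {x y} (hxy : R x y) (w : List A) :
    R (dstar d₁ x w) (dstar d₂ y w) := by
  induction w generalizing x y with
  | nil => exact hxy
  | cons a w ih => exact ih ((h x y hxy).2 a)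

lemma bisim_lang {A V₁ V₂ : Type*} {o₁ : V₁ → Bool} {d₁ : V₁ → A → V₁}
    {o₂ : V₂ → Bool} {d₂ : V₂ → A → V₂} {R : V₁ → V₂ → Prop}
    (h : isBisim o₁ d₁ o₂ d₂ R) {x y} (hxy : R x y) :
    lang o₁ d₁ x = lang o₂ d₂ y := by
  ext w
  have := (h _ _ (bisim_dstar h hxy w)).1
  simp [lang, this]

theorem regular_iff_bisimilar_to_finite {A : Type} [Finite A] {V : Type}
    (o : V → Bool) (d : V → A → V) (v : V) :
    ({L : Set (List A) | ∃ w : List A, L = {u | w ++ u ∈ lang o d v}}).Finite ↔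
      ∃ (V' : Type) (_ : Finite V') (o' : V' → Bool) (d' : V' → A → V') (v' : V')
        (R : V → V' → Prop), isBisim o d o' d' R ∧ R v v' := by
  classical
  constructor
  · intro hfin
    set S : Set (Set (List A)) :=
      {L : Set (List A) | ∃ w : List A, L = {u | w ++ u ∈ lang o d v}} with hSdef
    haveI : Finite S := hfin
    refine ⟨S, inferInstance, fun L => if ([] : List A) ∈ L.val then true else false,
      fun L a => ⟨{u | a :: u ∈ L.val}, ?_⟩,
      ⟨lang o d v, ⟨[], by ext u; simp⟩⟩,
      fun x y => lang o d x = y.val, ?_, by simp⟩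
    · obtain ⟨w, hw⟩ := L.2
      refine ⟨w ++ [a], ?_⟩
      ext u
      simp [hw, List.append_assoc]
    · intro x y hxy
      constructor
      · have h0 : ([] : List A) ∈ y.val ↔ o x = true := by
          rw [← hxy]; simp [lang, dstar]
        by_cases h : ([] : List A) ∈ y.val
        · simp [h, h0.mp h]
        · simp only [h, if_false]
          by_contra hc
          exact h (h0.mpr (by revert hc; cases o x <;> simp))
      · intro a
        show lang o d (d x a) = {u | a :: u ∈ y.val}
        rw [← hxy]
        have := lang_deriv o d x [a]
        simpa [dstar] using this.symm
  · rintro ⟨V', _, o', d', v', R, hR, hv⟩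
    apply Set.Finite.subset (Set.finite_range (lang o' d'))
    rintro L ⟨w, rfl⟩
    refine ⟨dstar d' v' w, ?_⟩
    rw [lang_deriv o d v w]
    exact (bisim_lang hR (bisim_dstar hR hv w)).symm
end
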